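/- arXiv:0907.0165 — 2 statements merged into one kernel-verified Lean document; each statement's English description precedes it below -/
import Mathlib

section
/- The q-Fibonacci polynomials satisfy the recurrence F_n(x,s,q) = x·F_{n-1}(x,qs,q) + qs·F_{n-2}(x,qs,q) for all n ≥ 2. -/
open Finset

noncomputable section

abbrev K : Type := RatFunc ℚ

def q : K := RatFunc.X

def qint (a : K) (m : ℕ) : K := ∑ i ∈ range m, a ^ i

def qfact (a : K) (m : ℕ) : K := ∏ i ∈ range m, qint a (i + 1)

def qbinom (a : K) (n k : ℕ) : K :=
  if k ≤ n then qfact a n / (qfact a k * qfact a (n - k)) else 0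

/-- q-Fibonacci polynomials F_n(x,s,q) with base `a`. -/
def qF (a x s : K) : ℕ → K
  | 0 => 0
  | n + 1 => ∑ k ∈ range (n / 2 + 1),
      a ^ (k * (k + 1) / 2) * qbinom a (n - k) k * s ^ k * x ^ (n - 2 * k)

/-- q-Lucas polynomials L_n(x,s,q) with base `a` (L_0 = 2). -/
def qL (a x s : K) (n : ℕ) : K :=
  if n = 0 then 2 else
  ∑ k ∈ range (n / 2 + 1),
    a ^ (k * (k - 1) / 2) * (qint a n / qint a (n - k)) * qbinom a (n - k) k
      * s ^ k * x ^ (n - 2 * k)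

/-- Starred variant: L*_0 = 1, L*_n = L_n for n > 0. -/
def qLs (a x s : K) (n : ℕ) : K := if n = 0 then 1 else qL a x s n

/-- Rogers-Szegő polynomial. -/
def rs (a x y : K) (m : ℕ) : K := ∑ j ∈ range (m + 1), qbinom a m j * x ^ j * y ^ (m - j)

/-- q-Pochhammer (q;q)_m. -/
def qpoch (a : K) (m : ℕ) : K := ∏ j ∈ range m, (1 - a ^ (j + 1))

lemma qint_ne {m : ℕ} (hm : 1 ≤ m) : qint q m ≠ 0 := by
  have : qint q m = algebraMap (Polynomial ℚ) K (∑ i ∈ range m, Polynomial.X ^ i) := by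
    simp [qint, q, map_sum, map_pow, RatFunc.algebraMap_X]
  rw [this]
  refine RatFunc.algebraMap_ne_zero ?_
  intro h
  have := congrArg (Polynomial.eval 1) h
  simp [Polynomial.eval_finset_sum] at this
  omega

lemma qfact_ne (m : ℕ) : qfact q m ≠ 0 := by
  refine Finset.prod_ne_zero_iff.2 fun i _ => qint_ne (by omega)

lemma qfact_zero : qfact q 0 = 1 := by simp [qfact]

lemma qfact_succ (m : ℕ) : qfact q (m + 1) = qfact q m * qint q (m + 1) := by
  simp [qfact, Finset.prod_range_succ]

lemma qint_split {k n : ℕ} (h : k ≤ n) :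
    qint q n = qint q k + q ^ k * qint q (n - k) := by
  calc qint q n = ∑ i ∈ range (k + (n - k)), q ^ i := by rw [qint, Nat.add_sub_cancel' h]
    _ = _ := by rw [Finset.sum_range_add, qint, qint, Finset.mul_sum]; simp [pow_add]

lemma qbinom_zero (n : ℕ) : qbinom q n 0 = 1 := by
  rw [qbinom, if_pos (Nat.zero_le n), qfact_zero, Nat.sub_zero, one_mul, div_self (qfact_ne n)]

lemma qbinom_diag (n : ℕ) : qbinom q n n = 1 := by
  rw [qbinom, if_pos le_rfl, Nat.sub_self, qfact_zero, mul_one, div_self (qfact_ne n)]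

lemma qbinom_of_lt {n k : ℕ} (h : n < k) : qbinom q n k = 0 := by
  rw [qbinom, if_neg (by omega)]

lemma pascal {n k : ℕ} (hk : 1 ≤ k) (hkn : k ≤ n) :
    qbinom q n k = q ^ k * qbinom q (n - 1) k + qbinom q (n - 1) (k - 1) := by
  rcases eq_or_lt_of_le hkn with rfl | hlt
  · rw [show qbinom q (k - 1) k = 0 from qbinom_of_lt (by omega), qbinom_diag, qbinom_diag]
    ring
  · obtain ⟨n, rfl⟩ : ∃ t, n = t + 1 := ⟨n - 1, by omega⟩
    obtain ⟨k, rfl⟩ : ∃ t, k = t + 1 := ⟨k - 1, by omega⟩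
    have hkn' : k + 1 ≤ n := by omega
    simp only [Nat.add_sub_cancel]
    rw [qbinom, qbinom, qbinom, if_pos (by omega : k + 1 ≤ n + 1), if_pos (by omega : k + 1 ≤ n),
      if_pos (by omega : k ≤ n)]
    have e1 : n + 1 - (k + 1) = n - k := by omega
    have e2 : n - (k + 1) = n - k - 1 := by omega
    rw [e1, e2]
    have hf1 : qfact q (n + 1) = qfact q n * qint q (n + 1) := qfact_succ n
    have hf2 : qfact q (k + 1) = qfact q k * qint q (k + 1) := qfact_succ k
    obtain ⟨d, hd⟩ : ∃ d, n - k = d + 1 := ⟨n - k - 1, by omega⟩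
    have hd1 : n - k - 1 = d := by omega
    have hf3 : qfact q (n - k) = qfact q (n - k - 1) * qint q (n - k) := by
      rw [hd]; simpa using qfact_succ d
    have key : qint q (n + 1) = qint q (k + 1) + q ^ (k + 1) * qint q (n - k) := by
      have h5 := qint_split (k := k + 1) (n := n + 1) (by omega)
      rwa [show n + 1 - (k + 1) = n - k by omega] at h5
    rw [hf1, hf2, hf3, key]
    have n1 := qint_ne (m := k + 1) (by omega)
    have n2 : qint q (n - k) ≠ 0 := qint_ne (by omega)
    have n3 := qfact_ne n
    have n4 := qfact_ne k
    have n5 := qfact_ne (n - k - 1)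
    field_simp
    ring

theorem stmt0 (x s : K) (n : ℕ) (hn : 2 ≤ n) :
    qF q x s n = x * qF q x (q * s) (n - 1) + q * s * qF q x (q * s) (n - 2) := by
  obtain ⟨m, rfl⟩ : ∃ m, n = m + 2 := ⟨n - 2, by omega⟩
  have h1 : m + 2 - 1 = m + 1 := rfl
  have h2 : m + 2 - 2 = m := rfl
  rw [h1, h2]
  have split : ∀ F : ℕ → K, ∑ k ∈ range ((m + 1) / 2 + 1), F k
      = F 0 + ∑ k ∈ Finset.Ico 1 ((m + 1) / 2 + 1), F k := fun F => by
    rw [Finset.range_eq_Ico, Finset.sum_eq_sum_Ico_succ_bot (by omega)]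
  have hLHS : qF q x s (m + 2)
      = (∑ k ∈ range ((m + 1) / 2 + 1),
          q ^ (k * (k + 1) / 2 + k) * qbinom q (m - k) k * s ^ k * x ^ (m + 1 - 2 * k))
        + ∑ k ∈ Finset.Ico 1 ((m + 1) / 2 + 1),
          q ^ (k * (k + 1) / 2) * qbinom q (m - k) (k - 1) * s ^ k * x ^ (m + 1 - 2 * k) := by
    simp only [qF]
    rw [split, split]
    rw [add_assoc, ← Finset.sum_add_distrib]
    congr 1
    · simp [qbinom_zero]
    · apply Finset.sum_congr rfl
      intro k hk
      simp only [Finset.mem_Ico] at hk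
      have hk1 : 1 ≤ k := hk.1
      have hkn : k ≤ m + 1 - k := by omega
      rw [pascal hk1 hkn, show m + 1 - k - 1 = m - k by omega, pow_add]
      ring
  have hR1 : x * qF q x (q * s) (m + 1)
      = ∑ k ∈ range ((m + 1) / 2 + 1),
          q ^ (k * (k + 1) / 2 + k) * qbinom q (m - k) k * s ^ k * x ^ (m + 1 - 2 * k) := by
    simp only [qF]
    rw [Finset.mul_sum]
    have hsub : range (m / 2 + 1) ⊆ range ((m + 1) / 2 + 1) :=
      Finset.range_subset_range.2 (by omega)
    rw [← Finset.sum_subset hsub (fun k hk hk2 => ?_)]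
    · apply Finset.sum_congr rfl
      intro k hk
      simp only [Finset.mem_range] at hk
      rw [show m + 1 - 2 * k = (m - 2 * k) + 1 by omega, pow_succ, mul_pow, pow_add]
      ring
    · simp only [Finset.mem_range] at hk hk2
      rw [qbinom_of_lt (show m - k < k by omega)]
      ring
  have hR2 : q * s * qF q x (q * s) m
      = ∑ k ∈ Finset.Ico 1 ((m + 1) / 2 + 1),
          q ^ (k * (k + 1) / 2) * qbinom q (m - k) (k - 1) * s ^ k * x ^ (m + 1 - 2 * k) := by
    rcases m with _ | t
    · simp [qF, show (0 + 1) / 2 + 1 = 1 from rfl]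
    · simp only [qF]
      rw [Finset.mul_sum, Finset.sum_Ico_eq_sum_range,
        show (t + 1 + 1) / 2 + 1 - 1 = t / 2 + 1 by omega]
      apply Finset.sum_congr rfl
      intro i hi
      simp only [Finset.mem_range] at hi
      rw [show 1 + i - 1 = i by omega, show t + 1 - (1 + i) = t - i by omega,
        show t + 1 + 1 - 2 * (1 + i) = t - 2 * i by omega,
        show (1 + i) * (1 + i + 1) / 2 = i * (i + 1) / 2 + i + 1 by
          have hdvd : 2 ∣ i * (i + 1) := (Nat.even_mul_succ_self i).two_dvd
          have hexp : (1 + i) * (1 + i + 1) = i * (i + 1) + 2 * (i + 1) := by ring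
          omega]
      rw [pow_add, pow_add, mul_pow, pow_succ]
      ring
  rw [hLHS, hR1, hR2]
end
end

section
/- (Carlitz inversion, Fibonacci form) For all n ≥ 0, ∑_{k=0}^{⌊n/2⌋} (qbinom(n,k) - qbinom(n,k-1)) · (-s)^k · F_{n+1-2k}(x,s,q) = x^n, where qbinom(n,-1) = 0. -/
open Finset

noncomputable section

set_option maxHeartbeats 1000000

section Aux

lemma q_pow_ne_one {j : ℕ} (hj : 1 ≤ j) : (q : K) ^ j ≠ 1 := by
  intro h
  have h2 : (Polynomial.X : Polynomial ℚ) ^ j = 1 := by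
    apply RatFunc.algebraMap_injective ℚ
    simpa [q, map_pow, RatFunc.algebraMap_X] using h
  have := congrArg Polynomial.natDegree h2
  simp [Polynomial.natDegree_X_pow] at this
  omega

lemma one_sub_q_pow_ne {j : ℕ} (hj : 1 ≤ j) : (1 : K) - q ^ j ≠ 0 :=
  sub_ne_zero.mpr fun h => q_pow_ne_one hj h.symm

lemma qint_mul (j : ℕ) : (1 - q) * qint q j = 1 - q ^ j := by
  have h := geom_sum_mul (q : K) j
  simp only [qint]
  linear_combination -h

lemma qint_ne_s8 {j : ℕ} (hj : 1 ≤ j) : qint q j ≠ 0 := by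
  intro h
  have := qint_mul j
  rw [h, mul_zero] at this
  exact one_sub_q_pow_ne hj this.symm

lemma qbinom_succ_right {n k : ℕ} (h : k + 1 ≤ n) :
    qbinom q n (k + 1) * (1 - q ^ (k + 1)) = qbinom q n k * (1 - q ^ (n - k)) := by
  have hk : k ≤ n := by omega
  have h1 : n - k = (n - (k + 1)) + 1 := by omega
  unfold qbinom
  rw [if_pos h, if_pos hk, ← qint_mul, ← qint_mul, qfact_succ k, h1, qfact_succ (n - (k+1))]
  rw [← h1]
  have e1 : qint q (n - k) ≠ 0 := qint_ne_s8 (by omega)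
  have e2 : qint q (k + 1) ≠ 0 := qint_ne_s8 (by omega)
  field_simp [qfact_ne]

lemma qbinom_pred {N K' : ℕ} (h1 : 1 ≤ K') (h2 : K' ≤ N) :
    qbinom q (N - 1) (K' - 1) * (1 - q ^ N) = qbinom q N K' * (1 - q ^ K') := by
  obtain ⟨N', rfl⟩ : ∃ N', N = N' + 1 := ⟨N - 1, by omega⟩
  obtain ⟨M, rfl⟩ : ∃ M, K' = M + 1 := ⟨K' - 1, by omega⟩
  have hMN : M ≤ N' := by omega
  simp only [Nat.add_sub_cancel]
  unfold qbinom
  rw [if_pos hMN, if_pos (by omega : M + 1 ≤ N' + 1), ← qint_mul, ← qint_mul,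
    qfact_succ N', qfact_succ M]
  have h3 : N' + 1 - (M + 1) = N' - M := by omega
  rw [h3]
  have e1 : qint q (N' + 1) ≠ 0 := qint_ne_s8 (by omega)
  have e2 : qint q (M + 1) ≠ 0 := qint_ne_s8 (by omega)
  field_simp [qfact_ne]

lemma qbinom_sub_one {n k : ℕ} (h1 : 1 ≤ k) (h2 : k ≤ n) :
    qbinom q n (k - 1) * (1 - q ^ (n - k + 1)) = qbinom q n k * (1 - q ^ k) := by
  obtain ⟨k', rfl⟩ : ∃ k', k = k' + 1 := ⟨k - 1, by omega⟩
  have := qbinom_succ_right (n := n) (k := k') (by omega)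
  simpa [show n - (k' + 1) + 1 = n - k' from by omega] using this.symm

/-- Telescoping certificate. -/
def Tel (n m k : ℕ) : K :=
  (-1 : K) ^ (k + 1) * q ^ m * (1 - q ^ k) * (1 - q ^ (n - m - k + 1)) * qbinom q n k
    * (q ^ ((m - k) * (m - k + 1) / 2) * qbinom q (n - m - k) (m - k))
    / ((1 - q ^ m) * (1 - q ^ (n - k + 1)))

lemma Tel_step {n m k : ℕ} (hk : k < m) (h2 : 2 * m ≤ n) :
    Tel n m (k + 1) - Tel n m k =
      (qbinom q n k - if k = 0 then 0 else qbinom q n (k - 1)) * (-1 : K) ^ k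
        * (q ^ ((m - k) * (m - k + 1) / 2) * qbinom q (n - m - k) (m - k)) := by
  obtain ⟨u, rfl⟩ : ∃ u, m = k + 1 + u := ⟨m - k - 1, by omega⟩
  obtain ⟨w, rfl⟩ : ∃ w, n = 2 * k + 2 + 2 * u + w := ⟨n - 2 * k - 2 - 2 * u, by omega⟩
  unfold Tel
  have e1 : k + 1 + u - k = u + 1 := by omega
  have e2 : k + 1 + u - (k + 1) = u := by omega
  have e3 : 2 * k + 2 + 2 * u + w - (k + 1 + u) - k = u + 1 + w := by omega
  have e4 : 2 * k + 2 + 2 * u + w - (k + 1 + u) - (k + 1) = u + w := by omega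
  have e5 : 2 * k + 2 + 2 * u + w - (k + 1) + 1 = k + 2 * u + w + 2 := by omega
  have e6 : 2 * k + 2 + 2 * u + w - k + 1 = k + 2 * u + w + 3 := by omega
  have htri : (u + 1) * (u + 1 + 1) / 2 = u * (u + 1) / 2 + (u + 1) := by
    obtain ⟨t, ht⟩ : 2 ∣ u * (u + 1) := u.even_mul_succ_self.two_dvd
    have h' : (u + 1) * (u + 1 + 1) = u * (u + 1) + 2 * (u + 1) := by ring
    omega
  rw [e1, e2, e3, e4, e5, e6, htri]
  have hA : qbinom q (2 * k + 2 + 2 * u + w) (k + 1) =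
      qbinom q (2 * k + 2 + 2 * u + w) k * (1 - q ^ (k + 2 * u + w + 2)) / (1 - q ^ (k + 1)) := by
    rw [eq_div_iff (one_sub_q_pow_ne (by omega))]
    have := qbinom_succ_right (n := 2 * k + 2 + 2 * u + w) (k := k) (by omega)
    rwa [show 2 * k + 2 + 2 * u + w - k = k + 2 * u + w + 2 from by omega] at this
  have hB : qbinom q (u + w) u =
      qbinom q (u + 1 + w) (u + 1) * (1 - q ^ (u + 1)) / (1 - q ^ (u + w + 1)) := by
    rw [eq_div_iff (one_sub_q_pow_ne (by omega))]
    have := qbinom_pred (N := u + w + 1) (K' := u + 1) (by omega) (by omega)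
    simpa [show u + w + 1 - 1 = u + w from by omega, show u + 1 + w = u + w + 1 from by omega]
      using this
  have hC : (if k = 0 then (0 : K) else qbinom q (2 * k + 2 + 2 * u + w) (k - 1)) =
      qbinom q (2 * k + 2 + 2 * u + w) k * (1 - q ^ k) / (1 - q ^ (k + 2 * u + w + 3)) := by
    rcases Nat.eq_zero_or_pos k with h0 | h0
    · subst h0; simp
    · rw [if_neg (by omega), eq_div_iff (one_sub_q_pow_ne (by omega))]
      have := qbinom_sub_one (n := 2 * k + 2 + 2 * u + w) (k := k) h0 (by omega)
      rwa [show 2 * k + 2 + 2 * u + w - k + 1 = k + 2 * u + w + 3 from by omega] at this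
  rw [hA, hB, hC]
  have d1 : (1 : K) - q ^ (k + 1 + u) ≠ 0 := one_sub_q_pow_ne (by omega)
  have d2 : (1 : K) - q ^ (k + 2 * u + w + 3) ≠ 0 := one_sub_q_pow_ne (by omega)
  have d3 : (1 : K) - q ^ (k + 2 * u + w + 2) ≠ 0 := one_sub_q_pow_ne (by omega)
  have d4 : (1 : K) - q ^ (k + 1) ≠ 0 := one_sub_q_pow_ne (by omega)
  have d5 : (1 : K) - q ^ (u + w + 1) ≠ 0 := one_sub_q_pow_ne (by omega)
  field_simp
  ring

lemma Tel_zero (n m : ℕ) : Tel n m 0 = 0 := by simp [Tel]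

lemma Tel_last {n m : ℕ} (hm : 1 ≤ m) (h2 : 2 * m ≤ n) :
    Tel n m m = - ((qbinom q n m - if m = 0 then 0 else qbinom q n (m - 1)) * (-1 : K) ^ m
      * (q ^ ((m - m) * (m - m + 1) / 2) * qbinom q (n - m - m) (m - m))) := by
  obtain ⟨w, rfl⟩ : ∃ w, n = 2 * m + w := ⟨n - 2 * m, by omega⟩
  unfold Tel
  have e1 : m - m = 0 := by omega
  have e2 : 2 * m + w - m - m = w := by omega
  have e3 : 2 * m + w - m + 1 = m + w + 1 := by omega
  rw [e1, e2, e3]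
  simp only [pow_zero, Nat.zero_mul, Nat.zero_div, qbinom_zero, if_neg (by omega : ¬ m = 0)]
  have hp : qbinom q (2 * m + w) (m - 1) * (1 - q ^ (m + w + 1)) =
      qbinom q (2 * m + w) m * (1 - q ^ m) := by
    have := qbinom_sub_one (n := 2 * m + w) (k := m) hm (by omega)
    rwa [show 2 * m + w - m + 1 = m + w + 1 from by omega] at this
  have d1 : (1 : K) - q ^ m ≠ 0 := one_sub_q_pow_ne (by omega)
  have d2 : (1 : K) - q ^ (m + w + 1) ≠ 0 := one_sub_q_pow_ne (by omega)
  rw [div_eq_iff (mul_ne_zero d1 d2)]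
  linear_combination (-(-1 : K) ^ m * (1 - q ^ m)) * hp

lemma Szero {n m : ℕ} (hm : 1 ≤ m) (h2 : 2 * m ≤ n) :
    ∑ k ∈ range (m + 1),
      (qbinom q n k - if k = 0 then 0 else qbinom q n (k - 1)) * (-1 : K) ^ k
        * (q ^ ((m - k) * (m - k + 1) / 2) * qbinom q (n - m - k) (m - k)) = 0 := by
  rw [Finset.sum_range_succ,
    ← Finset.sum_congr rfl (fun k hk => (Tel_step (Finset.mem_range.mp hk) h2)),
    Finset.sum_range_sub (Tel n m), Tel_zero, Tel_last hm h2]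
  ring

lemma tri_sum (f : ℕ → ℕ → K) (M : ℕ) :
    ∑ k ∈ range (M + 1), ∑ j ∈ range (M - k + 1), f k j
      = ∑ m ∈ range (M + 1), ∑ k ∈ range (m + 1), f k (m - k) := by
  induction M with
  | zero => simp
  | succ M ih =>
    rw [Finset.sum_range_succ (fun m => ∑ k ∈ range (m + 1), f k (m - k)) (M + 1), ← ih,
      Finset.sum_range_succ (fun k => ∑ j ∈ range (M + 1 - k + 1), f k j) (M + 1),
      Finset.sum_range_succ (fun k => f k (M + 1 - k)) (M + 1)]
    have h1 : ∀ k ∈ range (M + 1), ∑ j ∈ range (M + 1 - k + 1), f k j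
        = (∑ j ∈ range (M - k + 1), f k j) + f k (M + 1 - k) := by
      intro k hk
      rw [Finset.mem_range] at hk
      rw [show M + 1 - k + 1 = (M - k + 1) + 1 from by omega, Finset.sum_range_succ]
      congr 2
      omega
    rw [Finset.sum_congr rfl h1, Finset.sum_add_distrib]
    simp only [Nat.sub_self, zero_add, Finset.sum_range_one]
    ring

end Aux

theorem stmt8 (x s : K) (n : ℕ) :
    ∑ k ∈ range (n / 2 + 1),
      (qbinom q n k - if k = 0 then 0 else qbinom q n (k - 1)) * (-s) ^ k
        * qF q x s (n + 1 - 2 * k) = x ^ n := by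
  have hA : ∀ k ∈ range (n / 2 + 1),
      (qbinom q n k - if k = 0 then 0 else qbinom q n (k - 1)) * (-s) ^ k
          * qF q x s (n + 1 - 2 * k)
        = ∑ j ∈ range (n / 2 - k + 1),
            (qbinom q n k - if k = 0 then 0 else qbinom q n (k - 1)) * (-s) ^ k *
              (q ^ (j * (j + 1) / 2) * qbinom q (n - 2 * k - j) j * s ^ j
                * x ^ (n - 2 * k - 2 * j)) := by
    intro k hk
    rw [Finset.mem_range] at hk
    have h2k : 2 * k ≤ n := by omega
    rw [show n + 1 - 2 * k = (n - 2 * k) + 1 from by omega]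
    show _ * (∑ j ∈ range ((n - 2 * k) / 2 + 1), q ^ (j * (j + 1) / 2)
        * qbinom q (n - 2 * k - j) j * s ^ j * x ^ (n - 2 * k - 2 * j)) = _
    rw [show (n - 2 * k) / 2 = n / 2 - k from by omega, Finset.mul_sum]
  rw [Finset.sum_congr rfl hA, tri_sum]
  have hB : ∀ m ∈ range (n / 2 + 1), m ≠ 0 →
      ∑ k ∈ range (m + 1),
        (qbinom q n k - if k = 0 then 0 else qbinom q n (k - 1)) * (-s) ^ k *
          (q ^ ((m - k) * (m - k + 1) / 2) * qbinom q (n - 2 * k - (m - k)) (m - k)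
            * s ^ (m - k) * x ^ (n - 2 * k - 2 * (m - k))) = 0 := by
    intro m hm hm0
    rw [Finset.mem_range] at hm
    have h2m : 2 * m ≤ n := by omega
    have hterm : ∀ k ∈ range (m + 1),
        (qbinom q n k - if k = 0 then 0 else qbinom q n (k - 1)) * (-s) ^ k *
            (q ^ ((m - k) * (m - k + 1) / 2) * qbinom q (n - 2 * k - (m - k)) (m - k)
              * s ^ (m - k) * x ^ (n - 2 * k - 2 * (m - k)))
          = ((qbinom q n k - if k = 0 then 0 else qbinom q n (k - 1)) * (-1 : K) ^ k
              * (q ^ ((m - k) * (m - k + 1) / 2) * qbinom q (n - m - k) (m - k)))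
            * (s ^ m * x ^ (n - 2 * m)) := by
      intro k hk
      rw [Finset.mem_range] at hk
      rw [show n - 2 * k - (m - k) = n - m - k from by omega,
        show n - 2 * k - 2 * (m - k) = n - 2 * m from by omega]
      have hs : (-s) ^ k * s ^ (m - k) = (-1 : K) ^ k * s ^ m := by
        rw [neg_pow, mul_assoc, ← pow_add, show k + (m - k) = m from by omega]
      linear_combination ((qbinom q n k - if k = 0 then 0 else qbinom q n (k - 1))
        * q ^ ((m - k) * (m - k + 1) / 2) * qbinom q (n - m - k) (m - k)
        * x ^ (n - 2 * m)) * hs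
    rw [Finset.sum_congr rfl hterm, ← Finset.sum_mul, Szero (by omega) h2m, zero_mul]
  rw [Finset.sum_eq_single_of_mem 0 (Finset.mem_range.mpr (by omega)) hB]
  simp [qbinom_zero]
end
end
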